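/- Let X and Y be real-valued random variables with E[Y⁴] ≤ M and E[X⁴] ≤ M for some M > 0. For τ > 0, define the truncations Y̌ = sign(Y)·min(|Y|, τ) and X̌ = sign(X)·min(|X|, τ). Then |E[Y̌·X̌] - E[Y·X]| ≤ √2·M/τ². -/

import Mathlib

open MeasureTheory
open scoped ProbabilityTheory

private lemma real_sign_mul_abs (y : ℝ) : Real.sign y * |y| = y := by
  rcases lt_trichotomy y 0 with h | h | h
  · rw [Real.sign_of_neg h, abs_of_neg h]; ring
  · simp [h]
  · rw [Real.sign_of_pos h, abs_of_pos h]; ring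

private lemma real_sign_abs_le (y : ℝ) : |Real.sign y| ≤ 1 := by
  rcases Real.sign_apply_eq y with h | h | h <;> rw [h] <;> norm_num

private lemma trunc_eq_clamp (τ : ℝ) (hτ : 0 < τ) (y : ℝ) :
    Real.sign y * min |y| τ = max (-τ) (min y τ) := by
  rcases lt_trichotomy y 0 with h | h | h
  · rw [Real.sign_of_neg h, abs_of_neg h, min_eq_left (le_of_lt (lt_trans h hτ))]
    rcases le_total (-y) τ with h2 | h2
    · rw [min_eq_left h2, max_eq_right (by linarith)]; ring
    · rw [min_eq_right h2, max_eq_left (by linarith)]; ring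
  · simp [h, le_of_lt hτ]
  · rw [Real.sign_of_pos h, abs_of_pos h, one_mul,
      max_eq_right (le_trans (by linarith) (le_min h.le hτ.le))]

private lemma core_ineq (c d : ℝ) (hc : 0 ≤ c) (hd : 0 ≤ d) :
    Real.sqrt 2 * (c * d^3) ≤ c^4 + d^4 := by
  have h2 : Real.sqrt 2 ≤ 3/2 := by
    nlinarith [Real.sq_sqrt (by norm_num : (0:ℝ) ≤ 2), Real.sqrt_nonneg 2]
  have h3 : (3/2 : ℝ) * (c * d^3) ≤ c^4 + d^4 := by
    nlinarith [sq_nonneg (c - d), sq_nonneg (c*d - d^2), sq_nonneg (c^2 - d^2),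
      sq_nonneg (c^2 - c*d), mul_nonneg hc hd, sq_nonneg (2*c^2 - d^2), sq_nonneg d,
      mul_nonneg (mul_nonneg hc hd) hd]
  have hcd : 0 ≤ c * d^3 := by positivity
  nlinarith [mul_le_mul_of_nonneg_right h2 hcd]

private lemma key_ineq (a b τ : ℝ) (ha : 0 ≤ a) (hb : 0 ≤ b) (hτ : 0 < τ) :
    a * b - min a τ * min b τ ≤ (a^4 + b^4) / (Real.sqrt 2 * τ^2) := by
  have hs : 0 < Real.sqrt 2 := Real.sqrt_pos.mpr (by norm_num)
  have hpos : 0 < Real.sqrt 2 * τ^2 := by positivity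
  by_cases hab : a ≤ τ ∧ b ≤ τ
  · rw [min_eq_left hab.1, min_eq_left hab.2, sub_self]
    positivity
  · have hmin : 0 ≤ min a τ * min b τ :=
      mul_nonneg (le_min ha hτ.le) (le_min hb hτ.le)
    have hτm : τ < max a b := by
      rcases not_and_or.mp hab with h | h
      · exact lt_max_of_lt_left (not_le.mp h)
      · exact lt_max_of_lt_right (not_le.mp h)
    have hmaxnn : 0 ≤ max a b := le_trans hτ.le hτm.le
    have hminnn : 0 ≤ min a b := le_min ha hb
    have hcore : Real.sqrt 2 * (min a b * (max a b)^3) ≤ (min a b)^4 + (max a b)^4 :=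
      core_ineq _ _ hminnn hmaxnn
    have hprod : min a b * max a b = a * b := min_mul_max a b
    have hsum : (min a b)^4 + (max a b)^4 = a^4 + b^4 := by
      rcases le_total a b with h | h
      · rw [min_eq_left h, max_eq_right h]
      · rw [min_eq_right h, max_eq_left h]; ring
    rw [le_div_iff₀ hpos]
    have hτ2 : τ^2 ≤ (max a b)^2 := by nlinarith
    have habnn : 0 ≤ a * b := mul_nonneg ha hb
    calc (a * b - min a τ * min b τ) * (Real.sqrt 2 * τ^2)
        ≤ (a * b) * (Real.sqrt 2 * τ^2) := by
          apply mul_le_mul_of_nonneg_right _ hpos.le; linarith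
      _ ≤ (a * b) * (Real.sqrt 2 * (max a b)^2) := by
          apply mul_le_mul_of_nonneg_left _ habnn
          exact mul_le_mul_of_nonneg_left hτ2 hs.le
      _ = Real.sqrt 2 * (min a b * (max a b)^3) := by
          rw [← hprod]; ring
      _ ≤ (min a b)^4 + (max a b)^4 := hcore
      _ = a^4 + b^4 := hsum

private lemma pointwise_bound (τ : ℝ) (hτ : 0 < τ) (y x : ℝ) :
    |(Real.sign y * min |y| τ) * (Real.sign x * min |x| τ) - y * x| ≤
      (y^4 + x^4) / (Real.sqrt 2 * τ^2) := by
  have hy := real_sign_mul_abs y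
  have hx := real_sign_mul_abs x
  have hminy : 0 ≤ min |y| τ := le_min (abs_nonneg y) hτ.le
  have hminx : 0 ≤ min |x| τ := le_min (abs_nonneg x) hτ.le
  have hkey := key_ineq |y| |x| τ (abs_nonneg y) (abs_nonneg x) hτ
  have hyx : y * x = (Real.sign y * Real.sign x) * (|y| * |x|) := by
    conv_lhs => rw [← hy, ← hx]
    ring
  have heq : (Real.sign y * min |y| τ) * (Real.sign x * min |x| τ) - y * x
      = (Real.sign y * Real.sign x) * (min |y| τ * min |x| τ - |y| * |x|) := by
    rw [hyx]; ring
  rw [heq, abs_mul, abs_mul]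
  have h1 : |Real.sign y| * |Real.sign x| ≤ 1 :=
    mul_le_one₀ (real_sign_abs_le y) (abs_nonneg _) (real_sign_abs_le x)
  have h2 : abs (min |y| τ * min |x| τ - |y| * |x|) = |y| * |x| - min |y| τ * min |x| τ := by
    rw [abs_sub_comm, abs_of_nonneg]
    have := mul_le_mul (min_le_left |y| τ) (min_le_left |x| τ) hminx (abs_nonneg y)
    linarith
  rw [h2]
  have h3 : 0 ≤ |y| * |x| - min |y| τ * min |x| τ := by
    have := mul_le_mul (min_le_left |y| τ) (min_le_left |x| τ) hminx (abs_nonneg y)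
    linarith
  calc |Real.sign y| * |Real.sign x| * (|y| * |x| - min |y| τ * min |x| τ)
      ≤ 1 * (|y| * |x| - min |y| τ * min |x| τ) := mul_le_mul_of_nonneg_right h1 h3
    _ = |y| * |x| - min |y| τ * min |x| τ := one_mul _
    _ ≤ (|y|^4 + |x|^4) / (Real.sqrt 2 * τ^2) := hkey
    _ = (y^4 + x^4) / (Real.sqrt 2 * τ^2) := by
        have h4 : ∀ z : ℝ, |z|^4 = z^4 := fun z => by
          rw [pow_abs, abs_of_nonneg (by positivity)]
        rw [h4, h4]

/-- Bias bound for elementwise truncation (winsorization) under fourth-moment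
conditions: for `Y̌ = sign(Y)·min(|Y|, τ)` and `X̌ = sign(X)·min(|X|, τ)`,
`|E[Y̌·X̌] - E[Y·X]| ≤ √2·M/τ²`. -/
theorem truncation_bias_bound
    {Ω : Type*} [MeasureSpace Ω] [IsProbabilityMeasure (ℙ : Measure Ω)]
    (X Y : Ω → ℝ) (hX : Measurable X) (hY : Measurable Y)
    (M τ : ℝ) (hM : 0 < M) (hτ : 0 < τ)
    (hY4int : Integrable (fun ω => (Y ω) ^ 4))
    (hX4int : Integrable (fun ω => (X ω) ^ 4))
    (hXYint : Integrable (fun ω => Y ω * X ω))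
    (hY4 : ∫ ω, (Y ω) ^ 4 ≤ M) (hX4 : ∫ ω, (X ω) ^ 4 ≤ M) :
    |(∫ ω, (Real.sign (Y ω) * min |Y ω| τ) * (Real.sign (X ω) * min |X ω| τ)) -
        ∫ ω, Y ω * X ω| ≤ Real.sqrt 2 * M / τ ^ 2 := by
  have hs : 0 < Real.sqrt 2 := Real.sqrt_pos.mpr (by norm_num)
  set f : Ω → ℝ := fun ω => (Real.sign (Y ω) * min |Y ω| τ) * (Real.sign (X ω) * min |X ω| τ)
    with hf_def
  have hf_eq : f = fun ω => max (-τ) (min (Y ω) τ) * max (-τ) (min (X ω) τ) := by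
    funext ω
    rw [hf_def]
    simp only [trunc_eq_clamp τ hτ]
  have hf_meas : Measurable f := by
    rw [hf_eq]
    exact ((measurable_const.max (hY.min measurable_const)).mul
      (measurable_const.max (hX.min measurable_const)))
  have hbd : ∀ ω, ‖f ω‖ ≤ τ * τ := by
    intro ω
    rw [hf_eq]
    have h1 : ∀ y : ℝ, |max (-τ) (min y τ)| ≤ τ := by
      intro y
      rw [abs_le]
      constructor
      · exact le_max_left _ _
      · exact max_le (by linarith) (min_le_right _ _)
    calc ‖max (-τ) (min (Y ω) τ) * max (-τ) (min (X ω) τ)‖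
        = |max (-τ) (min (Y ω) τ)| * |max (-τ) (min (X ω) τ)| := abs_mul _ _
      _ ≤ τ * τ := mul_le_mul (h1 _) (h1 _) (abs_nonneg _) hτ.le
  have hf_int : Integrable f :=
    Integrable.mono' (integrable_const (τ * τ)) hf_meas.aestronglyMeasurable
      (ae_of_all _ hbd)
  have hdiff_int : Integrable (fun ω => f ω - Y ω * X ω) := hf_int.sub hXYint
  have hbound_int : Integrable (fun ω => ((Y ω)^4 + (X ω)^4) / (Real.sqrt 2 * τ^2)) :=
    (hY4int.add hX4int).div_const _
  rw [← integral_sub hf_int hXYint]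
  calc |∫ ω, (f ω - Y ω * X ω)|
      ≤ ∫ ω, |f ω - Y ω * X ω| := by
        simpa only [Real.norm_eq_abs] using
          norm_integral_le_integral_norm (fun ω => f ω - Y ω * X ω)
    _ ≤ ∫ ω, ((Y ω)^4 + (X ω)^4) / (Real.sqrt 2 * τ^2) := by
        apply integral_mono hdiff_int.abs hbound_int
        intro ω
        exact pointwise_bound τ hτ (Y ω) (X ω)
    _ = ((∫ ω, (Y ω)^4) + ∫ ω, (X ω)^4) / (Real.sqrt 2 * τ^2) := by
        rw [integral_div, integral_add hY4int hX4int]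
    _ ≤ (M + M) / (Real.sqrt 2 * τ^2) := by
        gcongr
    _ = Real.sqrt 2 * M / τ ^ 2 := by
        have h2sq : Real.sqrt 2 ^ 2 = 2 := Real.sq_sqrt (by norm_num)
        field_simp
        linear_combination (-1) * h2sq
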